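/- Let L be an integral ℓ-monoid and let A = (A, X, δ^A, σ^A, τ^A) be a fuzzy finite automaton over L. Define inductively a sequence (E_k) of crisp equivalences on A by: E₁(a,b) = 1 if τ^A(a) = τ^A(b) and E₁(a,b) = 0 otherwise; and E_{k+1} = E_k ∧ E_k^r, where E_k^r(a,b) = 1 if (δ^A_x∘E_k)(a,c) = (δ^A_x∘E_k)(b,c) for all x ∈ X and c ∈ A, and E_k^r(a,b) = 0 otherwise. Then the sequence (E_k) is descending, there is a least k ∈ ℕ such that E_k = E_{k+m} for every m ∈ ℕ, and this E_k is the greatest right invariant crisp equivalence on A. -/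

import Mathlib

attribute [local instance] Classical.propDecidable

/-- A lattice-ordered monoid (ℓ-monoid). -/
class LMonoid (L : Type*) extends Lattice L, BoundedOrder L, Monoid L where
  mul_bot : ∀ x : L, x * ⊥ = ⊥
  bot_mul : ∀ x : L, ⊥ * x = ⊥
  mul_sup : ∀ x y z : L, x * (y ⊔ z) = x * y ⊔ x * z
  sup_mul : ∀ x y z : L, (x ⊔ y) * z = x * z ⊔ y * z

/-- An integral ℓ-monoid: the unit of the multiplication is the top element of the lattice. -/
class IntegralLMonoid (L : Type*) extends LMonoid L where
  one_eq_top : (1 : L) = ⊤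

noncomputable section

/-- Composition of fuzzy relations: `(R ∘ S)(a,b) = ⋁_{c} R(a,c) ⊗ S(c,b)`. -/
def fcomp {L A : Type*} [IntegralLMonoid L] [Fintype A] (R S : A → A → L) : A → A → L :=
  fun a b => Finset.univ.sup fun c => R a c * S c b

/-- Composition of a fuzzy relation with a fuzzy set: `(R ∘ f)(a) = ⋁_{b} R(a,b) ⊗ f(b)`. -/
def fcompf {L A : Type*} [IntegralLMonoid L] [Fintype A] (R : A → A → L) (f : A → L) :
    A → L :=
  fun a => Finset.univ.sup fun b => R a b * f b

/-- `E` is a right invariant crisp equivalence on the fuzzy automaton `(A, X, δ, σ, τ)`: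
a crisp (`{0,1} ⊆ L`-valued) equivalence with `E ∘ δ_x ≤ δ_x ∘ E` for all `x ∈ X` and
`E ∘ τ = τ`. -/
def RightInvCrispEquiv {L A X : Type*} [IntegralLMonoid L] [Fintype A]
    (δ : A → X → A → L) (τ : A → L) (E : A → A → L) : Prop :=
  (∀ a b, E a b = 1 ∨ E a b = ⊥) ∧
  (∀ a, E a a = 1) ∧ (∀ a b, E a b = E b a) ∧
  (∀ a b c, E a b * E b c ≤ E a c) ∧
  (∀ (x : X) (a b : A),
    fcomp E (fun p q => δ p x q) a b ≤ fcomp (fun p q => δ p x q) E a b) ∧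
  (∀ a, fcompf E τ a = τ a)

/-- The descending sequence of crisp equivalences from Theorem 8 (here indexed from `0`,
so `Eseq δ τ k` is the relation `E_{k+1}` of the paper):
`E₁(a,b) = 1` iff `τ(a) = τ(b)`, and `E_{k+1} = E_k ∧ E_k^r`, where `E_k^r(a,b) = 1` iff
`(δ_x ∘ E_k)(a,c) = (δ_x ∘ E_k)(b,c)` for all `x ∈ X` and `c ∈ A`. -/
def Eseq {L A X : Type*} [IntegralLMonoid L] [Fintype A] (δ : A → X → A → L)
    (τ : A → L) : ℕ → A → A → L
  | 0 => fun a b => if τ a = τ b then 1 else ⊥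
  | k + 1 => fun a b => Eseq δ τ k a b ⊓
      (if ∀ (x : X) (c : A), fcomp (fun p q => δ p x q) (Eseq δ τ k) a c =
          fcomp (fun p q => δ p x q) (Eseq δ τ k) b c
        then (1 : L) else ⊥)

namespace Stmt14Aux

variable {L A X : Type*} [IntegralLMonoid L] [Fintype A]

lemma one_top : (1 : L) = ⊤ := IntegralLMonoid.one_eq_top

lemma degen (h : (1 : L) = ⊥) (x y : L) : x = y := by
  have hx : ∀ z : L, z = ⊥ := fun z =>
    le_antisymm (le_top.trans (by rw [← one_top (L := L), h])) bot_le
  rw [hx x, hx y]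

lemma mul_right_mono {x y : L} (c : L) (h : x ≤ y) : x * c ≤ y * c := by
  calc x * c ≤ x * c ⊔ y * c := le_sup_left
    _ = (x ⊔ y) * c := (LMonoid.sup_mul x y c).symm
    _ = y * c := by rw [sup_eq_right.mpr h]

lemma mul_left_mono {x y : L} (c : L) (h : x ≤ y) : c * x ≤ c * y := by
  calc c * x ≤ c * x ⊔ c * y := le_sup_left
    _ = c * (x ⊔ y) := (LMonoid.mul_sup c x y).symm
    _ = c * y := by rw [sup_eq_right.mpr h]

lemma sup_mul_finset (s : Finset A) (f : A → L) (c : L) :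
    s.sup f * c = s.sup (fun e => f e * c) := by
  induction s using Finset.induction_on with
  | empty => simp [LMonoid.bot_mul]
  | insert _ _ h ih => rw [Finset.sup_insert, Finset.sup_insert, LMonoid.sup_mul, ih]

/-- The crisp (`Prop`-valued) version of `Eseq`. -/
def Pr (δ : A → X → A → L) (τ : A → L) : ℕ → A → A → Prop
  | 0 => fun a b => τ a = τ b
  | k + 1 => fun a b => Pr δ τ k a b ∧
      ∀ (x : X) (c : A), fcomp (fun p q => δ p x q) (Eseq δ τ k) a c =
        fcomp (fun p q => δ p x q) (Eseq δ τ k) b c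

variable (δ : A → X → A → L) (τ : A → L)

lemma Eseq_eq_if : ∀ (n : ℕ) (a b : A), Eseq δ τ n a b = if Pr δ τ n a b then (1:L) else ⊥ := by
  intro n
  induction n with
  | zero => intro a b; rfl
  | succ n ih =>
    intro a b
    show Eseq δ τ n a b ⊓ _ = _
    rw [ih]
    by_cases h1 : Pr δ τ n a b <;>
      by_cases h2 : ∀ (x : X) (c : A), fcomp (fun p q => δ p x q) (Eseq δ τ n) a c =
        fcomp (fun p q => δ p x q) (Eseq δ τ n) b c <;>
      simp [Pr, h1, h2, one_top]

lemma Pr_refl : ∀ (n : ℕ) (a : A), Pr δ τ n a a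
  | 0, a => rfl
  | n+1, a => ⟨Pr_refl n a, fun _ _ => rfl⟩

lemma Pr_symm : ∀ (n : ℕ) (a b : A), Pr δ τ n a b → Pr δ τ n b a
  | 0, a, b, h => h.symm
  | n+1, a, b, h => ⟨Pr_symm n a b h.1, fun x c => (h.2 x c).symm⟩

lemma Pr_trans : ∀ (n : ℕ) (a b c : A), Pr δ τ n a b → Pr δ τ n b c → Pr δ τ n a c
  | 0, a, b, c, h, h' => h.trans h'
  | n+1, a, b, c, h, h' => ⟨Pr_trans n a b c h.1 h'.1, fun x d => (h.2 x d).trans (h'.2 x d)⟩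

lemma Pr_tau : ∀ (n : ℕ) (a b : A), Pr δ τ n a b → τ a = τ b
  | 0, _, _, h => h
  | n+1, a, b, h => Pr_tau n a b h.1

lemma Pr_of_degen (h : (1:L) = ⊥) : ∀ (n : ℕ) (a b : A), Pr δ τ n a b
  | 0, _, _ => degen h _ _
  | n+1, a, b => ⟨Pr_of_degen h n a b, fun _ _ => degen h _ _⟩

lemma Eseq_trans_L (n : ℕ) (a b c : A) :
    Eseq δ τ n a b * Eseq δ τ n b c ≤ Eseq δ τ n a c := by
  rw [Eseq_eq_if, Eseq_eq_if, Eseq_eq_if]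
  by_cases h1 : Pr δ τ n a b
  · by_cases h2 : Pr δ τ n b c
    · simp [h1, h2, Pr_trans δ τ n a b c h1 h2, one_top]
    · simp [h2, LMonoid.mul_bot]
  · simp [h1, LMonoid.bot_mul]

lemma Eseq_succ (n : ℕ) : Eseq δ τ (n+1) = fun a b => Eseq δ τ n a b ⊓
      (if ∀ (x : X) (c : A), fcomp (fun p q => δ p x q) (Eseq δ τ n) a c =
          fcomp (fun p q => δ p x q) (Eseq δ τ n) b c
        then (1 : L) else ⊥) := rfl

lemma stab {k : ℕ} (h : Eseq δ τ (k+1) = Eseq δ τ k) :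
    ∀ m, Eseq δ τ (k+m) = Eseq δ τ k
  | 0 => rfl
  | m+1 => by
    have hm := stab h m
    show Eseq δ τ ((k+m)+1) = Eseq δ τ k
    rw [Eseq_succ, hm, ← Eseq_succ, h]

lemma Pr_of_one_le {n : ℕ} {a b : A} (h : (1:L) ≤ Eseq δ τ n a b) : Pr δ τ n a b := by
  by_cases hp : Pr δ τ n a b
  · exact hp
  · have hb : Eseq δ τ n a b = ⊥ := by rw [Eseq_eq_if]; simp [hp]
    exact Pr_of_degen δ τ (le_antisymm (hb ▸ h) bot_le) n a b

lemma exists_stab : ∃ k, Eseq δ τ (k+1) = Eseq δ τ k := by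
  by_contra hc
  push_neg at hc
  set f : ℕ → Finset (A × A) :=
    fun n => Finset.univ.filter (fun p => Pr δ τ n p.1 p.2) with hf
  have hsub : ∀ n, f (n+1) ⊆ f n := by
    intro n p hp
    simp only [hf, Finset.mem_filter, Finset.mem_univ, true_and] at hp ⊢
    exact hp.1
  have hne : ∀ n, f (n+1) ≠ f n := by
    intro n he
    apply hc n
    funext a b
    have hiff : Pr δ τ (n+1) a b ↔ Pr δ τ n a b := by
      have := Finset.ext_iff.mp he (a, b)
      simpa [hf] using this
    rw [Eseq_eq_if, Eseq_eq_if]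
    simp only [hiff]
  have hlt : ∀ n, (f (n+1)).card < (f n).card := fun n =>
    Finset.card_lt_card (lt_of_le_of_ne (hsub n) (hne n))
  have hcard : ∀ n, (f n).card + n ≤ (f 0).card := by
    intro n
    induction n with
    | zero => simp
    | succ n ih => have := hlt n; omega
  have := hcard ((f 0).card + 1)
  omega

lemma cond_of_fix {k : ℕ} (h : Eseq δ τ (k+1) = Eseq δ τ k) {a b : A}
    (hab : Pr δ τ k a b) (x : X) (c : A) :
    fcomp (fun p q => δ p x q) (Eseq δ τ k) a c =
      fcomp (fun p q => δ p x q) (Eseq δ τ k) b c := by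
  by_cases hcond : ∀ (x : X) (c : A), fcomp (fun p q => δ p x q) (Eseq δ τ k) a c =
      fcomp (fun p q => δ p x q) (Eseq δ τ k) b c
  · exact hcond x c
  · have h1 : Eseq δ τ (k+1) a b = ⊥ := by
      rw [Eseq_eq_if]
      simp only [Pr]
      exact if_neg (show ¬ Pr δ τ (k+1) a b from fun hp => hcond hp.2)
    have h2 : Eseq δ τ k a b = 1 := by rw [Eseq_eq_if, if_pos hab]
    have hd : (1:L) = ⊥ := by rw [← h2, ← h, h1]
    exact degen hd _ _

lemma Eseq_refl (n : ℕ) (a : A) : Eseq δ τ n a a = 1 := by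
  rw [Eseq_eq_if, if_pos (Pr_refl δ τ n a)]

lemma rightinv_fix {k : ℕ} (h : Eseq δ τ (k+1) = Eseq δ τ k) (x : X) (a b : A) :
    fcomp (Eseq δ τ k) (fun p q => δ p x q) a b ≤
      fcomp (fun p q => δ p x q) (Eseq δ τ k) a b := by
  show Finset.univ.sup (fun c => Eseq δ τ k a c * δ c x b) ≤ _
  apply Finset.sup_le
  intro c _
  rw [Eseq_eq_if]
  by_cases hac : Pr δ τ k a c
  · rw [if_pos hac, one_mul]
    calc δ c x b = δ c x b * Eseq δ τ k b b := by rw [Eseq_refl, mul_one]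
      _ ≤ Finset.univ.sup (fun d => δ c x d * Eseq δ τ k d b) :=
          Finset.le_sup (f := fun d => δ c x d * Eseq δ τ k d b) (Finset.mem_univ b)
      _ = fcomp (fun p q => δ p x q) (Eseq δ τ k) c b := rfl
      _ = fcomp (fun p q => δ p x q) (Eseq δ τ k) a b := (cond_of_fix δ τ h hac x b).symm
  · rw [if_neg hac, LMonoid.bot_mul]; exact bot_le

lemma tau_eq (n : ℕ) (a : A) : fcompf (Eseq δ τ n) τ a = τ a := by
  show Finset.univ.sup (fun b => Eseq δ τ n a b * τ b) = τ a
  apply le_antisymm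
  · apply Finset.sup_le
    intro b _
    rw [Eseq_eq_if]
    by_cases hp : Pr δ τ n a b
    · rw [if_pos hp, one_mul, ← Pr_tau δ τ n a b hp]
    · rw [if_neg hp, LMonoid.bot_mul]; exact bot_le
  · calc τ a = Eseq δ τ n a a * τ a := by rw [Eseq_refl, one_mul]
      _ ≤ _ := Finset.le_sup (f := fun b => Eseq δ τ n a b * τ b) (Finset.mem_univ a)

lemma key {F : A → A → L} (hF : RightInvCrispEquiv δ τ F) {n : ℕ}
    (hIH : ∀ a b, F a b ≤ Eseq δ τ n a b) {a b : A} (hab : F a b = 1) (x : X) (c : A) :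
    fcomp (fun p q => δ p x q) (Eseq δ τ n) a c ≤
      fcomp (fun p q => δ p x q) (Eseq δ τ n) b c := by
  obtain ⟨hcrisp, hrefl, hsymm, htrans, hinv, htau⟩ := hF
  show Finset.univ.sup (fun d => δ a x d * Eseq δ τ n d c) ≤
    Finset.univ.sup (fun e => δ b x e * Eseq δ τ n e c)
  apply Finset.sup_le
  intro d _
  have h1 : δ a x d ≤ fcomp (fun p q => δ p x q) F b d := by
    have hba : F b a = 1 := (hsymm b a).trans hab
    have h0 : F b a * δ a x d ≤ Finset.univ.sup (fun e => F b e * δ e x d) :=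
      Finset.le_sup (f := fun e => F b e * δ e x d) (Finset.mem_univ a)
    rw [hba, one_mul] at h0
    exact h0.trans (hinv x b d)
  have h2 : δ a x d * Eseq δ τ n d c ≤
      Finset.univ.sup (fun e => δ b x e * F e d) * Eseq δ τ n d c :=
    mul_right_mono _ h1
  rw [sup_mul_finset] at h2
  refine h2.trans (Finset.sup_le ?_)
  intro e _
  have h3 : δ b x e * F e d * Eseq δ τ n d c ≤ δ b x e * Eseq δ τ n e c := by
    rw [mul_assoc]
    apply mul_left_mono
    calc F e d * Eseq δ τ n d c ≤ Eseq δ τ n e d * Eseq δ τ n d c :=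
          mul_right_mono _ (hIH e d)
      _ ≤ Eseq δ τ n e c := Eseq_trans_L δ τ n e d c
  exact h3.trans (Finset.le_sup (f := fun e => δ b x e * Eseq δ τ n e c) (Finset.mem_univ e))

lemma maximal {F : A → A → L} (hF : RightInvCrispEquiv δ τ F) :
    ∀ (n : ℕ) (a b : A), F a b ≤ Eseq δ τ n a b := by
  obtain ⟨hcrisp, hrefl, hsymm, htrans, hinv, htau⟩ := hF
  intro n
  induction n with
  | zero =>
    intro a b
    rw [Eseq_eq_if]
    by_cases hp : Pr δ τ 0 a b
    · rw [if_pos hp, one_top]; exact le_top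
    · rw [if_neg hp]
      rcases hcrisp a b with h1 | h1
      · exfalso
        apply hp
        show τ a = τ b
        have h2 : τ b ≤ τ a := by
          have h4 : F a b * τ b ≤ Finset.univ.sup (fun c => F a c * τ c) :=
            Finset.le_sup (f := fun c => F a c * τ c) (Finset.mem_univ b)
          rw [h1, one_mul] at h4
          exact h4.trans (le_of_eq (htau a))
        have h3 : τ a ≤ τ b := by
          have h4 : F b a * τ a ≤ Finset.univ.sup (fun c => F b c * τ c) :=
            Finset.le_sup (f := fun c => F b c * τ c) (Finset.mem_univ a)
          rw [(hsymm b a).trans h1, one_mul] at h4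
          exact h4.trans (le_of_eq (htau b))
        exact le_antisymm h3 h2
      · rw [h1]
  | succ n ih =>
    intro a b
    rw [Eseq_eq_if]
    by_cases hp : Pr δ τ (n+1) a b
    · rw [if_pos hp, one_top]; exact le_top
    · rw [if_neg hp]
      rcases hcrisp a b with h1 | h1
      · exfalso
        apply hp
        refine ⟨Pr_of_one_le δ τ (h1 ▸ ih a b), fun x c => le_antisymm ?_ ?_⟩
        · exact key δ τ ⟨hcrisp, hrefl, hsymm, htrans, hinv, htau⟩ ih h1 x c
        · exact key δ τ ⟨hcrisp, hrefl, hsymm, htrans, hinv, htau⟩ ih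
            ((hsymm b a).trans h1) x c
      · rw [h1]

end Stmt14Aux

/-- Let `L` be an integral ℓ-monoid and `(A, X, δ, σ, τ)` a fuzzy finite
automaton over `L`.  The inductively defined sequence `(E_k)` of crisp equivalences is
descending, there is a least `k` such that `E_k = E_{k+m}` for every `m`, and this `E_k`
is the greatest right invariant crisp equivalence on the automaton. -/
theorem stmt14 {L A X : Type*} [IntegralLMonoid L] [Fintype A] [Fintype X]
    (δ : A → X → A → L) (σ τ : A → L) :
    (∀ (k : ℕ) (a b : A), Eseq δ τ (k + 1) a b ≤ Eseq δ τ k a b) ∧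
    ∃ k : ℕ,
      (∀ m : ℕ, Eseq δ τ (k + m) = Eseq δ τ k) ∧
      (∀ j : ℕ, (∀ m : ℕ, Eseq δ τ (j + m) = Eseq δ τ j) → k ≤ j) ∧
      RightInvCrispEquiv δ τ (Eseq δ τ k) ∧
      (∀ F : A → A → L, RightInvCrispEquiv δ τ F → ∀ a b, F a b ≤ Eseq δ τ k a b) := by
  constructor
  · intro k a b
    exact inf_le_left
  · have hex : ∃ k, Eseq δ τ (k+1) = Eseq δ τ k := Stmt14Aux.exists_stab δ τ
    refine ⟨Nat.find hex, Stmt14Aux.stab δ τ (Nat.find_spec hex), ?_, ?_, ?_⟩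
    · intro j hj
      exact Nat.find_le (hj 1)
    · refine ⟨?_, ?_, ?_, ?_, ?_, ?_⟩
      · intro a b
        rw [Stmt14Aux.Eseq_eq_if]
        by_cases hp : Stmt14Aux.Pr δ τ (Nat.find hex) a b
        · left; rw [if_pos hp]
        · right; rw [if_neg hp]
      · exact Stmt14Aux.Eseq_refl δ τ _
      · intro a b
        rw [Stmt14Aux.Eseq_eq_if, Stmt14Aux.Eseq_eq_if]
        by_cases hp : Stmt14Aux.Pr δ τ (Nat.find hex) a b
        · rw [if_pos hp, if_pos (Stmt14Aux.Pr_symm δ τ _ a b hp)]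
        · rw [if_neg hp, if_neg (fun h => hp (Stmt14Aux.Pr_symm δ τ _ b a h))]
      · exact Stmt14Aux.Eseq_trans_L δ τ _
      · exact Stmt14Aux.rightinv_fix δ τ (Nat.find_spec hex)
      · exact Stmt14Aux.tau_eq δ τ _
    · intro F hF a b
      exact Stmt14Aux.maximal δ τ hF _ a b

end
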